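/- Let x₀ ∈ ℂⁿ and let Ψ₁, Ψ₂ be holomorphic (complex Fréchet differentiable) functions on an open neighborhood U of (x₀, conj x₀) in ℂⁿ × ℂⁿ such that Ψ₁(x, conj x) = Ψ₂(x, conj x) for all x in a neighborhood of x₀. Then Ψ₁ = Ψ₂ on a neighborhood of (x₀, conj x₀). In particular, a real-analytic function Φ near x₀ has at most one polarization: there is at most one holomorphic Ψ near (x₀, conj x₀) with Ψ(x, conj x) = Φ(x) near x₀. -/

import Mathlib

open Complex

noncomputable section

/-- `ℂⁿ` with its Euclidean (Hermitian) norm. -/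
abbrev En (n : ℕ) := EuclideanSpace ℂ (Fin n)

/-- Componentwise complex conjugation on `ℂⁿ`. -/
def conjV (n : ℕ) (x : En n) : En n :=
  (WithLp.equiv 2 (Fin n → ℂ)).symm fun j => (starRingEnd ℂ) (x j)

/-- A holomorphic function on a polydisc (sup-norm ball) in `ℂ^ι` vanishing at all points with
real coordinates vanishes on the whole ball. -/
lemma key_totally_real {ι : Type*} [Fintype ι] [DecidableEq ι] {G : (ι → ℂ) → ℂ} {r : ℝ}
    (hr : 0 < r) (hG : DifferentiableOn ℂ G (Metric.ball 0 r))
    (h0 : ∀ q ∈ Metric.ball (0 : ι → ℂ) r, (∀ j, (q j).im = 0) → G q = 0) :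
    ∀ q ∈ Metric.ball (0 : ι → ℂ) r, G q = 0 := by
  suffices H : ∀ S : Finset ι, ∀ q ∈ Metric.ball (0 : ι → ℂ) r,
      (∀ j ∉ S, (q j).im = 0) → G q = 0 by
    intro q hq
    exact H Finset.univ q hq fun j hj => absurd (Finset.mem_univ j) hj
  intro S
  induction S using Finset.induction with
  | empty =>
    intro q hq h
    exact h0 q hq fun j => h j (by simp)
  | @insert j₀ S hj₀ IH =>
    intro q hq hre
    set h : ℂ → ℂ := fun z => G (Function.update q j₀ z) with hh_def
    have hmem : ∀ z ∈ Metric.ball (0 : ℂ) r,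
        Function.update q j₀ z ∈ Metric.ball (0 : ι → ℂ) r := by
      intro z hz
      rw [mem_ball_zero_iff] at hz ⊢
      rw [pi_norm_lt_iff hr]
      intro i
      rcases eq_or_ne i j₀ with h | h
      · rw [Function.update_apply, if_pos h]
        exact hz
      · rw [Function.update_apply, if_neg h]
        exact lt_of_le_of_lt (norm_le_pi_norm q i) (mem_ball_zero_iff.mp hq)
    have hupd : Differentiable ℂ fun z : ℂ => Function.update q j₀ z := by
      rw [differentiable_pi]
      intro i
      rcases eq_or_ne i j₀ with h | h
      · simpa [h, Function.update_apply] using differentiable_id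
      · simpa [Function.update_apply, h] using differentiable_const (q i)
    have hh : DifferentiableOn ℂ h (Metric.ball 0 r) :=
      hG.comp hupd.differentiableOn hmem
    have hreal : ∀ t : ℝ, |t| < r → h t = 0 := by
      intro t ht
      refine IH _ (hmem _ (by simpa using ht)) ?_
      intro j hj
      rcases eq_or_ne j j₀ with h | h
      · simp [h, Function.update_apply]
      · rw [Function.update_apply, if_neg h]
        exact hre j (by simp [Finset.mem_insert, h, hj])
    have hfreq : ∃ᶠ z in nhdsWithin (0 : ℂ) {(0:ℂ)}ᶜ, h z = 0 := by
      have htend0 : Filter.Tendsto (fun k : ℕ => (r / (k + 2) : ℝ)) Filter.atTop (nhds 0) := by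
        have := (tendsto_const_div_atTop_nhds_zero_nat r).comp (Filter.tendsto_add_atTop_nat 2)
        refine this.congr fun k => ?_
        show r / ((k + 2 : ℕ) : ℝ) = _
        push_cast
        ring
      have htend : Filter.Tendsto (fun k : ℕ => ((r / (k + 2) : ℝ) : ℂ)) Filter.atTop
          (nhdsWithin (0 : ℂ) {(0:ℂ)}ᶜ) := by
        rw [tendsto_nhdsWithin_iff]
        constructor
        · have hcont : Filter.Tendsto (fun x : ℝ => (x : ℂ)) (nhds 0) (nhds 0) := by
            simpa using Complex.continuous_ofReal.tendsto 0
          exact hcont.comp htend0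
        · refine Filter.Eventually.of_forall fun k => ?_
          have hpos : (0:ℝ) < r / (k + 2) := by positivity
          simp only [Set.mem_compl_iff, Set.mem_singleton_iff]
          exact_mod_cast ne_of_gt hpos
      refine htend.frequently (Filter.Eventually.frequently (Filter.Eventually.of_forall
        fun k => ?_))
      apply hreal
      have hpos : (0:ℝ) < r / (k + 2) := by positivity
      rw [abs_of_pos hpos]
      refine div_lt_self hr ?_
      have := Nat.cast_nonneg (α := ℝ) k
      linarith
    have hEq : Set.EqOn h 0 (Metric.ball 0 r) :=
      (hh.analyticOnNhd Metric.isOpen_ball).eqOn_zero_of_preconnected_of_frequently_eq_zero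
        (convex_ball (0:ℂ) r).isPreconnected (Metric.mem_ball_self hr) hfreq
    have hq0 : q j₀ ∈ Metric.ball (0 : ℂ) r := by
      rw [mem_ball_zero_iff]
      exact lt_of_le_of_lt (norm_le_pi_norm q j₀) (mem_ball_zero_iff.mp hq)
    have := hEq hq0
    simpa [hh_def, Function.update_eq_self] using this

/-- two holomorphic functions near `(x₀, conj x₀)` that agree on the
anti-diagonal `{(x, conj x)}` near `x₀` agree on a whole neighborhood of `(x₀, conj x₀)`.
In particular the polarization of a real-analytic function is unique. -/
theorem statement4 (n : ℕ)
    (x₀ : En n) (U : Set (En n × En n)) (hU : IsOpen U) (hx₀U : (x₀, conjV n x₀) ∈ U)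
    (Ψ₁ Ψ₂ : En n × En n → ℂ)
    (h₁ : DifferentiableOn ℂ Ψ₁ U) (h₂ : DifferentiableOn ℂ Ψ₂ U)
    (heq : ∃ W : Set (En n), IsOpen W ∧ x₀ ∈ W ∧
      ∀ x ∈ W, Ψ₁ (x, conjV n x) = Ψ₂ (x, conjV n x)) :
    ∃ U' : Set (En n × En n), IsOpen U' ∧ (x₀, conjV n x₀) ∈ U' ∧ U' ⊆ U ∧
      Set.EqOn Ψ₁ Ψ₂ U' := by
  obtain ⟨W, hWopen, hx₀W, hWeq⟩ := heq
  set F : En n × En n → ℂ := fun y => Ψ₁ y - Ψ₂ y with hF_def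
  have hF : DifferentiableOn ℂ F U := h₁.sub h₂
  -- the (holomorphic) complexified coordinates
  set A : ((Fin n ⊕ Fin n) → ℂ) → En n × En n := fun q =>
    ((WithLp.equiv 2 (Fin n → ℂ)).symm fun j => x₀ j + (q (.inl j) + I * q (.inr j)),
     (WithLp.equiv 2 (Fin n → ℂ)).symm fun j =>
        (starRingEnd ℂ) (x₀ j) + (q (.inl j) - I * q (.inr j))) with hA_def
  have hA0 : A 0 = (x₀, conjV n x₀) := by
    refine Prod.ext ?_ ?_
    · apply PiLp.ext; intro j
      simp [hA_def]
    · apply PiLp.ext; intro j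
      simp [hA_def, conjV]
  have hAdiff : Differentiable ℂ A := by
    have hcoord : ∀ i : Fin n ⊕ Fin n, Differentiable ℂ fun q : (Fin n ⊕ Fin n) → ℂ => q i :=
      fun i => differentiable_pi.mp differentiable_id i
    refine Differentiable.prodMk ?_ ?_
    · refine Differentiable.comp
        ((EuclideanSpace.equiv (Fin n) ℂ).symm.differentiable) ?_
      rw [differentiable_pi]
      intro j
      exact (differentiable_const _).add ((hcoord _).add ((differentiable_const I).mul
        (hcoord _)))
    · refine Differentiable.comp
        ((EuclideanSpace.equiv (Fin n) ℂ).symm.differentiable) ?_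
      rw [differentiable_pi]
      intro j
      exact (differentiable_const _).add ((hcoord _).sub ((differentiable_const I).mul
        (hcoord _)))
  have hAcont : Continuous A := hAdiff.continuous
  -- choose a polydisc around 0 mapped by A into U and whose first component lies in W
  have hVopen : IsOpen (A ⁻¹' U ∩ (fun q => (A q).1) ⁻¹' W) :=
    (hU.preimage hAcont).inter (hWopen.preimage ((continuous_fst.comp hAcont)))
  have h0V : (0 : (Fin n ⊕ Fin n) → ℂ) ∈ A ⁻¹' U ∩ (fun q => (A q).1) ⁻¹' W := by
    constructor
    · show A 0 ∈ U
      rw [hA0]; exact hx₀U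
    · show (A 0).1 ∈ W
      rw [hA0]; exact hx₀W
  obtain ⟨r, hr, hball⟩ := Metric.isOpen_iff.mp hVopen 0 h0V
  set G : ((Fin n ⊕ Fin n) → ℂ) → ℂ := F ∘ A with hG_def
  have hGdiff : DifferentiableOn ℂ G (Metric.ball 0 r) :=
    hF.comp hAdiff.differentiableOn fun q hq => (hball hq).1
  -- key computation: on real points, A q lies on the antidiagonal
  have hanti : ∀ q : (Fin n ⊕ Fin n) → ℂ, (∀ j, (q j).im = 0) →
      A q = ((A q).1, conjV n (A q).1) := by
    intro q hqre
    refine Prod.ext rfl ?_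
    apply PiLp.ext; intro j
    have h1 : (starRingEnd ℂ) (q (Sum.inl j)) = q (Sum.inl j) :=
      Complex.conj_eq_iff_im.mpr (hqre _)
    have h2 : (starRingEnd ℂ) (q (Sum.inr j)) = q (Sum.inr j) :=
      Complex.conj_eq_iff_im.mpr (hqre _)
    simp only [hA_def, conjV, WithLp.equiv_symm_apply, WithLp.ofLp_toLp, map_add, map_mul, Complex.conj_I,
      h1, h2]
    ring
  have hG0 : ∀ q ∈ Metric.ball (0 : (Fin n ⊕ Fin n) → ℂ) r, G q = 0 := by
    apply key_totally_real hr hGdiff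
    intro q hq hqre
    have hW : (A q).1 ∈ W := (hball hq).2
    have := hWeq _ hW
    simp only [hG_def, Function.comp_apply, hF_def]
    rw [hanti q hqre]
    rw [this]
    ring
  -- the inverse affine map
  set B : En n × En n → ((Fin n ⊕ Fin n) → ℂ) := fun y => Sum.elim
    (fun j => ((y.1 j - x₀ j) + (y.2 j - (starRingEnd ℂ) (x₀ j))) / 2)
    (fun j => ((y.1 j - x₀ j) - (y.2 j - (starRingEnd ℂ) (x₀ j))) / (2 * I)) with hB_def
  have hBcont : Continuous B := by
    have hc1 : ∀ j : Fin n, Continuous fun y : En n × En n => y.1 j :=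
      fun j => (EuclideanSpace.proj j).continuous.comp continuous_fst
    have hc2 : ∀ j : Fin n, Continuous fun y : En n × En n => y.2 j :=
      fun j => (EuclideanSpace.proj j).continuous.comp continuous_snd
    apply continuous_pi
    intro i
    rcases i with j | j
    · exact Continuous.div_const (((hc1 j).sub continuous_const).add
        ((hc2 j).sub continuous_const)) _
    · exact Continuous.div_const (((hc1 j).sub continuous_const).sub
        ((hc2 j).sub continuous_const)) _
  have hAB : ∀ y : En n × En n, A (B y) = y := by
    intro y
    have hI : (I : ℂ) ≠ 0 := Complex.I_ne_zero
    refine Prod.ext ?_ ?_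
    · apply PiLp.ext; intro j
      simp only [hA_def, hB_def, WithLp.equiv_symm_apply, WithLp.ofLp_toLp, Sum.elim_inl, Sum.elim_inr]
      field_simp
      ring
    · apply PiLp.ext; intro j
      simp only [hA_def, hB_def, WithLp.equiv_symm_apply, WithLp.ofLp_toLp, Sum.elim_inl, Sum.elim_inr]
      field_simp
      ring
  refine ⟨B ⁻¹' Metric.ball 0 r, Metric.isOpen_ball.preimage hBcont, ?_, ?_, ?_⟩
  · have : B (x₀, conjV n x₀) = 0 := by
      funext i
      rcases i with j | j <;> simp [hB_def, conjV]
    simp [Set.mem_preimage, this, hr]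
  · intro y hy
    have := (hball hy).1
    rwa [Set.mem_preimage, hAB y] at this
  · intro y hy
    have h := hG0 (B y) hy
    simp only [hG_def, Function.comp_apply, hAB y, hF_def] at h
    exact sub_eq_zero.mp h


end
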